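/- Let f ∈ H. Suppose (u,p) ∈ V × Q solves the Oseen source problem: a(u,v) + d(p,v) = ⟨f, ι v⟩_H for all v ∈ V and d(q,u) = 0 for all q ∈ Q, and suppose (u_S,p_S) ∈ V × Q solves the corresponding Stokes source problem (the same system with the convective form removed): ν⟨u_S,v⟩_V + d(p_S,v) = ⟨f, ι v⟩_H for all v ∈ V and d(q,u_S) = 0 for all q ∈ Q. Then ‖u − u_S‖_V ≤ C_p(B/ν)‖u‖_V, and consequently ‖u − u_S‖_V ≤ C_p²(B/ν²)‖f‖_H. In particular, the Oseen solution operator converges to the Stokes solution operator in norm as the convective bound B tends to zero. -/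

import Mathlib

/-- Convergence of the Oseen solution to the Stokes solution as the convective
bound `B` tends to zero: `‖u − u_S‖_V ≤ C_p(B/ν)‖u‖_V` and consequently
`‖u − u_S‖_V ≤ C_p²(B/ν²)‖f‖_H`. -/
theorem oseen_to_stokes_convergence
    {V H Q : Type*} [NormedAddCommGroup V] [InnerProductSpace ℂ V] [CompleteSpace V]
    [NormedAddCommGroup H] [InnerProductSpace ℂ H] [CompleteSpace H]
    [NormedAddCommGroup Q] [InnerProductSpace ℂ Q] [CompleteSpace Q]
    (ι : V →L[ℂ] H) (C_p : ℝ) (hCp : 0 < C_p)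
    (hι : ∀ v : V, ‖ι v‖ ≤ C_p * ‖v‖)
    (ν : ℝ) (hν : 0 < ν)
    (c : V →ₗ[ℂ] V →ₛₗ[starRingEnd ℂ] ℂ) (B : ℝ) (hB : 0 ≤ B)
    (hc0 : ∀ v : V, (c v v).re = 0)
    (hcb : ∀ u v : V, ‖c u v‖ ≤ B * ‖u‖ * ‖ι v‖)
    (d : Q →ₗ[ℂ] V →ₛₗ[starRingEnd ℂ] ℂ) (M_d : ℝ)
    (hd : ∀ (q : Q) (v : V), ‖d q v‖ ≤ M_d * ‖q‖ * ‖v‖)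
    (f : H) (u u_S : V) (p p_S : Q)
    (hsol : ∀ v : V,
      (ν : ℂ) * (inner ℂ v u : ℂ) + c u v + d p v = (inner ℂ (ι v) f : ℂ))
    (hdiv : ∀ q : Q, d q u = 0)
    (hsolS : ∀ v : V,
      (ν : ℂ) * (inner ℂ v u_S : ℂ) + d p_S v = (inner ℂ (ι v) f : ℂ))
    (hdivS : ∀ q : Q, d q u_S = 0) :
    ‖u - u_S‖ ≤ C_p * (B / ν) * ‖u‖ ∧
    ‖u - u_S‖ ≤ C_p ^ 2 * (B / ν ^ 2) * ‖f‖ := by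
  set e := u - u_S with he
  have hde : ∀ q : Q, d q e = 0 := by
    intro q; simp [he, map_sub, hdiv q, hdivS q]
  -- key identity: ν⟨e,e⟩ + c u e = 0
  have key : (ν : ℂ) * (inner ℂ e e : ℂ) + c u e = 0 := by
    have h1 := hsol e
    have h2 := hsolS e
    rw [hde p, add_zero] at h1
    rw [hde p_S, add_zero] at h2
    rw [← h2] at h1
    have hinner : (inner ℂ e e : ℂ) = (inner ℂ e u : ℂ) - (inner ℂ e u_S : ℂ) := by
      rw [he, inner_sub_right]
    rw [hinner]
    linear_combination h1
  have hee : (inner ℂ e e : ℂ) = ((‖e‖ : ℂ)) ^ 2 := inner_self_eq_norm_sq_to_K e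
  have huu : (inner ℂ u u : ℂ) = ((‖u‖ : ℂ)) ^ 2 := inner_self_eq_norm_sq_to_K u
  -- ν‖e‖² ≤ B * C_p * ‖u‖ * ‖e‖
  have hre : ν * ‖e‖ ^ 2 ≤ B * ‖u‖ * (C_p * ‖e‖) := by
    have h2 : (ν : ℂ) * (inner ℂ e e : ℂ) = -(c u e) := by linear_combination key
    have h1 : ((ν : ℂ) * (inner ℂ e e : ℂ)).re = ν * ‖e‖ ^ 2 := by
      rw [hee]; rw [← Complex.ofReal_pow, ← Complex.ofReal_mul, Complex.ofReal_re]
    have h3 : ν * ‖e‖ ^ 2 ≤ ‖c u e‖ := by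
      rw [← h1, h2]
      calc (-(c u e)).re ≤ ‖-(c u e)‖ := Complex.re_le_norm _
        _ = ‖c u e‖ := norm_neg _
    refine h3.trans ((hcb u e).trans ?_)
    exact mul_le_mul_of_nonneg_left (hι e) (by positivity)
  have h1 : ‖e‖ ≤ C_p * (B / ν) * ‖u‖ := by
    rcases eq_or_lt_of_le (norm_nonneg e) with h | h
    · rw [← h]; positivity
    · have h4 : ν * ‖e‖ ≤ C_p * B * ‖u‖ := by
        have := (mul_le_mul_iff_of_pos_right h).mp
          (by nlinarith [hre] : ν * ‖e‖ * ‖e‖ ≤ C_p * B * ‖u‖ * ‖e‖)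
        linarith
      have heq : C_p * (B / ν) * ‖u‖ = C_p * B * ‖u‖ / ν := by ring
      rw [heq, le_div_iff₀ hν]
      nlinarith [h4]
  -- bound ν‖u‖ ≤ C_p ‖f‖
  have hu : ν * ‖u‖ ≤ C_p * ‖f‖ := by
    have hs := hsol u
    rw [hdiv p, add_zero] at hs
    have hre2 : ν * ‖u‖ ^ 2 ≤ C_p * ‖u‖ * ‖f‖ := by
      have heq : ((ν : ℂ) * (inner ℂ u u : ℂ) + c u u).re = ν * ‖u‖ ^ 2 := by
        rw [Complex.add_re, hc0, add_zero, huu]; rw [← Complex.ofReal_pow, ← Complex.ofReal_mul, Complex.ofReal_re]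
      have h5 : ν * ‖u‖ ^ 2 ≤ ‖(inner ℂ (ι u) f : ℂ)‖ := by
        rw [← heq, hs]; exact Complex.re_le_norm _
      refine h5.trans ?_
      calc ‖(inner ℂ (ι u) f : ℂ)‖ ≤ ‖ι u‖ * ‖f‖ := norm_inner_le_norm _ _
        _ ≤ C_p * ‖u‖ * ‖f‖ :=
            mul_le_mul_of_nonneg_right (hι u) (norm_nonneg f)
    rcases eq_or_lt_of_le (norm_nonneg u) with h | h
    · rw [← h, mul_zero]; positivity
    · nlinarith [hre2]
  refine ⟨h1, h1.trans ?_⟩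
  have h6 : ‖u‖ ≤ C_p * ‖f‖ / ν := by
    rw [le_div_iff₀ hν]; nlinarith [hu]
  calc C_p * (B / ν) * ‖u‖ ≤ C_p * (B / ν) * (C_p * ‖f‖ / ν) :=
        mul_le_mul_of_nonneg_left h6 (by positivity)
    _ = C_p ^ 2 * (B / ν ^ 2) * ‖f‖ := by field_simp
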